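/- arXiv:2209.03975 — 6 statements merged into one kernel-verified Lean document; each statement's English description precedes it below -/
import Mathlib

section
/- Let n ≥ 1 and let {O_a} be an orthonormal basis of the space of n×n complex matrices with respect to the (unnormalized) trace inner product ⟨X,Y⟩ = Tr(Xᴴ Y). Then Σ_a O_aᴴ ⊗ O_a = S, where ⊗ denotes the Kronecker product and S is the n²×n² swap matrix, with entries S_{(i,j),(k,l)} = 1 if i = l and j = k, and 0 otherwise (so S(v ⊗ w) = w ⊗ v). -/
open Matrix
open scoped Kronecker

/-- The swap matrix `S` on `ℂⁿ ⊗ ℂⁿ`, with `S_{(i,j),(k,l)} = δ_{il} δ_{jk}`. -/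
def swapMat (n : ℕ) : Matrix (Fin n × Fin n) (Fin n × Fin n) ℂ :=
  Matrix.of fun p q => if p.1 = q.2 ∧ p.2 = q.1 then 1 else 0

/-- For any orthonormal basis `{O_a}` of `Matrix n n ℂ` with respect to the unnormalized
trace inner product `⟨X,Y⟩ = Tr(Xᴴ Y)`, one has `Σ_a O_aᴴ ⊗ O_a = SWAP`. -/
theorem sum_conjTranspose_kron_self_eq_swap {n : ℕ}
    {ι : Type*} [Fintype ι] [DecidableEq ι]
    (O : ι → Matrix (Fin n) (Fin n) ℂ)
    (hOorth : ∀ a a', ((O a)ᴴ * O a').trace = if a = a' then 1 else 0)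
    (hOspan : Submodule.span ℂ (Set.range O) = ⊤) :
    ∑ a : ι, (O a)ᴴ ⊗ₖ (O a) = swapMat n := by
  classical
  let T : Matrix (Fin n) (Fin n) ℂ →ₗ[ℂ] Matrix (Fin n) (Fin n) ℂ :=
    { toFun := fun X => ∑ a, ((O a)ᴴ * X).trace • O a
      map_add' := by
        intro X Y
        simp [Matrix.mul_add, Matrix.trace_add, add_smul, Finset.sum_add_distrib]
      map_smul' := by
        intro c X
        simp [Matrix.mul_smul, Matrix.trace_smul, smul_smul, Finset.smul_sum] }
  have hTid : T = LinearMap.id := by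
    apply LinearMap.ext_on hOspan
    rintro _ ⟨a, rfl⟩
    show ∑ a', ((O a')ᴴ * O a).trace • O a' = O a
    have : ∀ a', ((O a')ᴴ * O a).trace • O a'
        = if a' = a then O a' else 0 := by
      intro a'
      rw [hOorth a' a]
      split <;> simp
    rw [Finset.sum_congr rfl fun a' _ => this a', Finset.sum_ite_eq' Finset.univ a O]
    simp
  have key : ∀ X : Matrix (Fin n) (Fin n) ℂ, ∑ a, ((O a)ᴴ * X).trace • O a = X := by
    intro X
    simpa [T] using LinearMap.ext_iff.mp hTid X
  ext ⟨i, k⟩ ⟨j, l⟩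
  have h := congrFun (congrFun (congrArg (fun M => (M : _ → _ → ℂ))
      (key (Matrix.single j i (1 : ℂ)))) k) l
  have htr : ∀ a, ((O a)ᴴ * Matrix.single j i (1 : ℂ)).trace
      = (starRingEnd ℂ) ((O a) j i) := by
    intro a
    simp [Matrix.trace, Matrix.diag, Matrix.mul_apply, Matrix.single,
      Matrix.conjTranspose_apply, Finset.sum_ite_eq', ite_and]
  simp only [Matrix.sum_apply, Matrix.smul_apply, smul_eq_mul, htr] at h
  simp only [Matrix.sum_apply, Matrix.kroneckerMap_apply, Matrix.conjTranspose_apply,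
    swapMat, Matrix.of_apply]
  simp only [← starRingEnd_apply]
  rw [h]
  by_cases h1 : i = l <;> by_cases h2 : k = j <;>
    simp [Matrix.single, h1, h2, eq_comm]
end

section
/- Let m and p be finite types and let {O_a} be an orthonormal basis of the space of m×m complex matrices with respect to ⟨X,Y⟩ = Tr(Xᴴ Y). On the doubled bipartite system indexed by (m × p) × (m × p), one has Σ_a (O_aᴴ ⊗ 𝟙_p) ⊠ (O_a ⊗ 𝟙_p) = S₁, where ⊗ denotes the Kronecker product identifying ℂ^{m×p} ≅ ℂ^m ⊗ ℂ^p, ⊠ denotes the Kronecker product between the two copies of ℂ^{m×p}, and S₁ is the permutation matrix implementing the bijection ((x,u),(y,v)) ↦ ((y,u),(x,v)) of (m×p)×(m×p), i.e., the matrix that swaps the first (m-) tensor factors of the two copies while leaving the second (p-) factors fixed. -/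
open Matrix
open scoped Kronecker

lemma complete_aux {m : Type*} [Fintype m] [DecidableEq m]
    {ι : Type*} [Fintype ι] [DecidableEq ι]
    (O : ι → Matrix m m ℂ)
    (hOorth : ∀ a a', ((O a)ᴴ * O a').trace = if a = a' then 1 else 0)
    (hOspan : Submodule.span ℂ (Set.range O) = ⊤)
    (X : Matrix m m ℂ) : ∑ a, ((O a)ᴴ * X).trace • O a = X := by
  have hX : X ∈ Submodule.span ℂ (Set.range O) := hOspan ▸ Submodule.mem_top
  obtain ⟨c, hc⟩ := (Submodule.mem_span_range_iff_exists_fun ℂ).mp hX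
  rw [← hc]
  have : ∀ a, ((O a)ᴴ * ∑ b, c b • O b).trace = c a := by
    intro a
    rw [Matrix.mul_sum, trace_sum]
    simp [Matrix.mul_smul, trace_smul, hOorth]
  simp_rw [this]

lemma complete_entry {m : Type*} [Fintype m] [DecidableEq m]
    {ι : Type*} [Fintype ι] [DecidableEq ι]
    (O : ι → Matrix m m ℂ)
    (hOorth : ∀ a a', ((O a)ᴴ * O a').trace = if a = a' then 1 else 0)
    (hOspan : Submodule.span ℂ (Set.range O) = ⊤)
    (i j k l : m) :
    ∑ a, star (O a k l) * O a i j = if i = k ∧ j = l then 1 else 0 := by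
  have h := complete_aux O hOorth hOspan (Matrix.single k l 1)
  have h2 := congrFun (congrFun (congrArg (fun M : Matrix m m ℂ => (M : m → m → ℂ)) h) i) j
  simp only [Matrix.sum_apply, Matrix.smul_apply, smul_eq_mul] at h2
  have htr : ∀ a, ((O a)ᴴ * Matrix.single k l 1).trace = star (O a k l) := by
    intro a
    simp [Matrix.trace, Matrix.mul_apply, Matrix.diag, Matrix.single,
      Matrix.conjTranspose_apply, Finset.sum_ite_eq, mul_ite, ite_and]
  simp_rw [htr] at h2
  rw [h2]
  by_cases h1 : i = k <;> by_cases h3 : j = l <;>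
    simp [Matrix.single, h1, h3, eq_comm]

/-- The partial swap `S₁` on two copies of the bipartite system `m × p`: the permutation
matrix of the bijection `((x,u),(y,v)) ↦ ((y,u),(x,v))`, which exchanges the `m`-factors
of the two copies and fixes the `p`-factors. -/
def partialSwapMat (m p : Type*) [DecidableEq m] [DecidableEq p] :
    Matrix ((m × p) × (m × p)) ((m × p) × (m × p)) ℂ :=
  Matrix.of fun r s =>
    if r.1.1 = s.2.1 ∧ r.1.2 = s.1.2 ∧ r.2.1 = s.1.1 ∧ r.2.2 = s.2.2 then 1 else 0

/-- `Σ_a (O_aᴴ ⊗ 𝟙_p) ⊠ (O_a ⊗ 𝟙_p) = SWAP_A` for an orthonormal basis `{O_a}` of the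
operators on subsystem `m` (with respect to the unnormalized trace inner product). -/
theorem sum_kron_eq_partialSwap {m p : Type*}
    [Fintype m] [DecidableEq m] [Fintype p] [DecidableEq p]
    {ι : Type*} [Fintype ι] [DecidableEq ι]
    (O : ι → Matrix m m ℂ)
    (hOorth : ∀ a a', ((O a)ᴴ * O a').trace = if a = a' then 1 else 0)
    (hOspan : Submodule.span ℂ (Set.range O) = ⊤) :
    ∑ a : ι, ((O a)ᴴ ⊗ₖ (1 : Matrix p p ℂ)) ⊗ₖ ((O a) ⊗ₖ (1 : Matrix p p ℂ)) =
      partialSwapMat m p := by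
  ext r s
  simp only [Matrix.sum_apply, Matrix.kroneckerMap_apply, Matrix.conjTranspose_apply,
    Matrix.one_apply, partialSwapMat, Matrix.of_apply]
  by_cases h1 : r.1.2 = s.1.2
  · by_cases h2 : r.2.2 = s.2.2
    · simp only [h1, h2, if_true, mul_one]
      rw [complete_entry O hOorth hOspan r.2.1 s.2.1 s.1.1 r.1.1]
      by_cases h3 : r.1.1 = s.2.1 <;> by_cases h4 : r.2.1 = s.1.1 <;>
        simp [h1, h2, h3, h4, eq_comm]
    · simp [h1, h2]
  · simp [h1]
end

section
/- Let Λ be a finite set of sites, d ≥ 1, and ι := (Λ → Fin d). For A ⊆ Λ, let S_A be the permutation matrix on ι × ι induced by the bijection σ_A(x,y) := (x', y') where x'(r) = y(r) and y'(r) = x(r) for r ∈ A, and x'(r) = x(r), y'(r) = y(r) for r ∉ A (S_A swaps the A-coordinates between the two copies). Then for every matrix U ∈ Matrix ι ι ℂ and all subsets A, B ⊆ Λ: Tr((Uᴴ ⊗ Uᴴ) · S_A · (U ⊗ U) · S_B) = Tr((Uᴴ ⊗ Uᴴ) · S_{Λ∖A} · (U ⊗ U) · S_{Λ∖B}), where ⊗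 denotes the Kronecker product (matrices indexed by ι × ι). -/
open Matrix
open scoped Kronecker

/-- The bijection of two copies of the many-body configuration space `ι = Λ → Fin d`
that swaps the coordinates belonging to `A` between the two copies. -/
def swapFun {Λ : Type*} [DecidableEq Λ] {d : ℕ} (A : Finset Λ)
    (q : (Λ → Fin d) × (Λ → Fin d)) : (Λ → Fin d) × (Λ → Fin d) :=
  (fun r => if r ∈ A then q.2 r else q.1 r, fun r => if r ∈ A then q.1 r else q.2 r)

/-- The partial swap `S_A`: the permutation matrix on `ι × ι` induced by `swapFun A`. -/
def partialSwap {Λ : Type*} [Fintype Λ] [DecidableEq Λ] {d : ℕ} (A : Finset Λ) :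
    Matrix ((Λ → Fin d) × (Λ → Fin d)) ((Λ → Fin d) × (Λ → Fin d)) ℂ :=
  Matrix.of fun p q => if p = swapFun A q then 1 else 0

section Aux

variable {Λ : Type*} [Fintype Λ] [DecidableEq Λ] {d : ℕ}

lemma swapFun_invol (A : Finset Λ) (q : (Λ → Fin d) × (Λ → Fin d)) :
    swapFun A (swapFun A q) = q := by
  unfold swapFun
  refine Prod.ext ?_ ?_ <;> funext r <;> by_cases h : r ∈ A <;> simp [h]

lemma swapFun_univ (q : (Λ → Fin d) × (Λ → Fin d)) :
    swapFun (Finset.univ : Finset Λ) q = q.swap := by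
  unfold swapFun
  refine Prod.ext ?_ ?_ <;> funext r <;> simp

lemma swapFun_swap_univ (A : Finset Λ) (q : (Λ → Fin d) × (Λ → Fin d)) :
    swapFun A (swapFun (Finset.univ : Finset Λ) q) = swapFun Aᶜ q := by
  unfold swapFun
  refine Prod.ext ?_ ?_ <;> funext r <;> by_cases h : r ∈ A <;> simp [h]

lemma swapFun_univ_swap (A : Finset Λ) (q : (Λ → Fin d) × (Λ → Fin d)) :
    swapFun (Finset.univ : Finset Λ) (swapFun A q) = swapFun Aᶜ q := by
  unfold swapFun
  refine Prod.ext ?_ ?_ <;> funext r <;> by_cases h : r ∈ A <;> simp [h]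

lemma mul_partialSwap (M : Matrix ((Λ → Fin d) × (Λ → Fin d)) ((Λ → Fin d) × (Λ → Fin d)) ℂ)
    (A : Finset Λ) :
    M * partialSwap A = Matrix.of fun p q => M p (swapFun A q) := by
  ext p q
  simp only [Matrix.mul_apply, partialSwap, Matrix.of_apply, mul_ite, mul_one, mul_zero]
  rw [Finset.sum_ite_eq' Finset.univ (swapFun A q) (fun k => M p k)]
  simp

lemma partialSwap_mul (A : Finset Λ)
    (M : Matrix ((Λ → Fin d) × (Λ → Fin d)) ((Λ → Fin d) × (Λ → Fin d)) ℂ) :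
    partialSwap A * M = Matrix.of fun p q => M (swapFun A p) q := by
  ext p q
  have key : ∀ k : (Λ → Fin d) × (Λ → Fin d), (p = swapFun A k) ↔ (k = swapFun A p) :=
    fun k => ⟨fun h => by rw [h, swapFun_invol], fun h => by rw [h, swapFun_invol]⟩
  simp only [Matrix.mul_apply, partialSwap, Matrix.of_apply, key, ite_mul, one_mul, zero_mul]
  rw [Finset.sum_ite_eq' Finset.univ (swapFun A p) (fun k => M k q)]
  simp

lemma partialSwap_compl_left (A : Finset Λ) :
    (partialSwap Aᶜ : Matrix ((Λ → Fin d) × (Λ → Fin d)) _ ℂ) =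
      partialSwap A * partialSwap (Finset.univ : Finset Λ) := by
  rw [partialSwap_mul]
  ext p q
  simp only [partialSwap, Matrix.of_apply]
  have key : (p = swapFun Aᶜ q) ↔ (swapFun A p = swapFun (Finset.univ : Finset Λ) q) := by
    constructor
    · intro h
      rw [h, ← swapFun_swap_univ, swapFun_invol]
    · intro h
      have := congrArg (swapFun A) h
      rwa [swapFun_invol, swapFun_swap_univ] at this
  simp [key]

lemma partialSwap_compl_right (B : Finset Λ) :
    (partialSwap Bᶜ : Matrix ((Λ → Fin d) × (Λ → Fin d)) _ ℂ) =
      partialSwap (Finset.univ : Finset Λ) * partialSwap B := by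
  rw [partialSwap_mul]
  ext p q
  simp only [partialSwap, Matrix.of_apply]
  have key : (p = swapFun Bᶜ q) ↔ (swapFun (Finset.univ : Finset Λ) p = swapFun B q) := by
    constructor
    · intro h
      rw [h, ← swapFun_univ_swap, swapFun_invol]
    · intro h
      have := congrArg (swapFun (Finset.univ : Finset Λ)) h
      rwa [swapFun_invol, swapFun_univ_swap] at this
  simp [key]

lemma partialSwap_univ_sq :
    (partialSwap (Finset.univ : Finset Λ) : Matrix ((Λ → Fin d) × (Λ → Fin d)) _ ℂ) *
      partialSwap (Finset.univ : Finset Λ) = 1 := by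
  rw [partialSwap_mul]
  ext p q
  simp only [partialSwap, Matrix.of_apply, Matrix.one_apply]
  have key : (swapFun (Finset.univ : Finset Λ) p = swapFun (Finset.univ : Finset Λ) q) ↔ p = q := by
    constructor
    · intro h
      have := congrArg (swapFun (Finset.univ : Finset Λ)) h
      rwa [swapFun_invol, swapFun_invol] at this
    · intro h; rw [h]
  simp [key]

lemma kron_comm_swap (U : Matrix (Λ → Fin d) (Λ → Fin d) ℂ) :
    (U ⊗ₖ U) * partialSwap (Finset.univ : Finset Λ) =
      partialSwap (Finset.univ : Finset Λ) * (U ⊗ₖ U) := by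
  rw [mul_partialSwap, partialSwap_mul]
  ext p q
  simp [kroneckerMap_apply, swapFun_univ, Prod.swap, mul_comm]

end Aux

/-- `Tr((Uᴴ⊗Uᴴ)·S_A·(U⊗U)·S_B) = Tr((Uᴴ⊗Uᴴ)·S_{Λ∖A}·(U⊗U)·S_{Λ∖B})`. -/
theorem trace_partialSwap_compl {Λ : Type*} [Fintype Λ] [DecidableEq Λ]
    {d : ℕ} (hd : 1 ≤ d) (U : Matrix (Λ → Fin d) (Λ → Fin d) ℂ) (A B : Finset Λ) :
    ((Uᴴ ⊗ₖ Uᴴ) * partialSwap A * (U ⊗ₖ U) * partialSwap B).trace =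
      ((Uᴴ ⊗ₖ Uᴴ) * partialSwap Aᶜ * (U ⊗ₖ U) * partialSwap Bᶜ).trace := by
  have : (Uᴴ ⊗ₖ Uᴴ) * partialSwap Aᶜ * (U ⊗ₖ U) * partialSwap Bᶜ =
      (Uᴴ ⊗ₖ Uᴴ) * partialSwap A * (U ⊗ₖ U) * partialSwap B := by
    rw [partialSwap_compl_left, partialSwap_compl_right]
    calc (Uᴴ ⊗ₖ Uᴴ) * (partialSwap A * partialSwap Finset.univ) * (U ⊗ₖ U) *
          (partialSwap Finset.univ * partialSwap B)
        = (Uᴴ ⊗ₖ Uᴴ) * partialSwap A * (partialSwap Finset.univ * (U ⊗ₖ U) *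
            partialSwap Finset.univ) * partialSwap B := by
          simp only [Matrix.mul_assoc]
      _ = (Uᴴ ⊗ₖ Uᴴ) * partialSwap A * ((U ⊗ₖ U) * (partialSwap Finset.univ *
            partialSwap Finset.univ)) * partialSwap B := by
          rw [← kron_comm_swap]
          simp only [Matrix.mul_assoc]
      _ = (Uᴴ ⊗ₖ Uᴴ) * partialSwap A * (U ⊗ₖ U) * partialSwap B := by
          rw [partialSwap_univ_sq, Matrix.mul_one]
  rw [this]
end

section
/- Let Λ be a finite set with |Λ| = N, let d ≥ 1, and ι := (Λ → Fin d). For S ⊆ Λ, let 𝒜_S be the subspace of matrices in Matrix ι ι ℂ supported on S. Equip matrices with the normalized trace tr(M) := Tr(M)/d^N and the inner product ⟨X,Y⟩ := tr(Xᴴ Y), and define η(𝒮,𝒯) := sqrt(Σ_{a,b} |tr(O_aᴴ O_b)|²), computed with orthonormal bases {O_a} of 𝒮 and {O_b} of 𝒯 (this is independent of the choice of bases). Then for every unitary U ∈ Matrix ι ι ℂ and all A, B ⊆ Λ: η(Uᴴ 𝒜_A U, 𝒜_B) = d^{|A| + |B| − N} · η(Uᴴ 𝒜_{Λ∖A} U,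 𝒜_{Λ∖B}), where Uᴴ 𝒮 U := {Uᴴ M U : M ∈ 𝒮}. -/
open Matrix

variable {Λ : Type*} [Fintype Λ] [DecidableEq Λ] {d : ℕ}

/-- A matrix on the many-body space `ι = Λ → Fin d` is supported on `S ⊆ Λ` if its entries
vanish whenever the two configurations differ at a site outside `S`, and otherwise depend
only on the restrictions of the configurations to `S`. -/
def SupportedOn (S : Finset Λ) (M : Matrix (Λ → Fin d) (Λ → Fin d) ℂ) : Prop :=
  (∀ x y, (∃ r ∉ S, x r ≠ y r) → M x y = 0) ∧
  (∀ x y x' y', (∀ r ∈ S, x r = x' r) → (∀ r ∈ S, y r = y' r) →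
    (∀ r ∉ S, x r = y r) → (∀ r ∉ S, x' r = y' r) → M x y = M x' y')

/-- The subspace `𝒜_S` of matrices supported on `S`. -/
noncomputable def suppSubmodule (Λ : Type*) [Fintype Λ] [DecidableEq Λ] (d : ℕ) (S : Finset Λ) :
    Submodule ℂ (Matrix (Λ → Fin d) (Λ → Fin d) ℂ) where
  carrier := {M | SupportedOn S M}
  zero_mem' := ⟨fun _ _ _ => rfl, fun _ _ _ _ _ _ _ _ => rfl⟩
  add_mem' := fun {a b} ha hb =>
    ⟨fun x y h => by simp [Matrix.add_apply, ha.1 x y h, hb.1 x y h],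
     fun x y x' y' h1 h2 h3 h4 => by
      simp [Matrix.add_apply, ha.2 x y x' y' h1 h2 h3 h4, hb.2 x y x' y' h1 h2 h3 h4]⟩
  smul_mem' := fun c M hM =>
    ⟨fun x y h => by simp [Matrix.smul_apply, hM.1 x y h],
     fun x y x' y' h1 h2 h3 h4 => by simp [Matrix.smul_apply, hM.2 x y x' y' h1 h2 h3 h4]⟩

/-- Conjugation `M ↦ Uᴴ M U` as a linear map on matrices. -/
noncomputable def conjLM {ι : Type*} [Fintype ι] [DecidableEq ι] (U : Matrix ι ι ℂ) :
    Matrix ι ι ℂ →ₗ[ℂ] Matrix ι ι ℂ where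
  toFun M := Uᴴ * M * U
  map_add' M N := by simp [Matrix.mul_add, Matrix.add_mul]
  map_smul' c M := by simp [Matrix.mul_smul, Matrix.smul_mul]

/-- The normalized trace `tr(M) = Tr(M)/d^N` on the many-body space, with `tr(𝟙) = 1`. -/
noncomputable def ntr (M : Matrix (Λ → Fin d) (Λ → Fin d) ℂ) : ℂ :=
  M.trace / (d : ℂ) ^ (Fintype.card Λ)

/-- An orthonormal basis of a subspace of matrices with respect to `⟨X,Y⟩ = tr(Xᴴ Y)`. -/
def IsONBasisOf {ι : Type*} [Fintype ι] [DecidableEq ι]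
    (O : ι → Matrix (Λ → Fin d) (Λ → Fin d) ℂ)
    (S : Submodule ℂ (Matrix (Λ → Fin d) (Λ → Fin d) ℂ)) : Prop :=
  (∀ a, O a ∈ S) ∧ (∀ a a', ntr ((O a)ᴴ * O a') = if a = a' then 1 else 0) ∧
    Submodule.span ℂ (Set.range O) = S

set_option linter.unusedSectionVars false

lemma ntr_add (M N : Matrix (Λ → Fin d) (Λ → Fin d) ℂ) : ntr (M + N) = ntr M + ntr N := by
  simp [ntr, Matrix.trace_add, add_div]

lemma ntr_smul (c : ℂ) (M : Matrix (Λ → Fin d) (Λ → Fin d) ℂ) : ntr (c • M) = c * ntr M := by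
  simp [ntr, Matrix.trace_smul, mul_div_assoc]

lemma ntr_sum {γ : Type*} (s : Finset γ) (f : γ → Matrix (Λ → Fin d) (Λ → Fin d) ℂ) :
    ntr (∑ i ∈ s, f i) = ∑ i ∈ s, ntr (f i) := by
  simp [ntr, Matrix.trace_sum, Finset.sum_div]

lemma ntr_conj (M : Matrix (Λ → Fin d) (Λ → Fin d) ℂ) : star (ntr M) = ntr Mᴴ := by
  simp [ntr, Matrix.trace_conjTranspose, star_div₀]

lemma star_ntr_mul (X Y : Matrix (Λ → Fin d) (Λ → Fin d) ℂ) :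
    star (ntr (Xᴴ * Y)) = ntr (Yᴴ * X) := by
  rw [ntr_conj, Matrix.conjTranspose_mul, Matrix.conjTranspose_conjTranspose]

lemma norm_ntr_comm (X Y : Matrix (Λ → Fin d) (Λ → Fin d) ℂ) :
    ‖ntr (Xᴴ * Y)‖ = ‖ntr (Yᴴ * X)‖ := by
  rw [← star_ntr_mul, norm_star]

lemma onb_expand {κ : Type*} [Fintype κ] [DecidableEq κ]
    (P : κ → Matrix (Λ → Fin d) (Λ → Fin d) ℂ)
    (hP : ∀ a a', ntr ((P a)ᴴ * P a') = if a = a' then 1 else 0)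
    {v : Matrix (Λ → Fin d) (Λ → Fin d) ℂ} (hv : v ∈ Submodule.span ℂ (Set.range P)) :
    ∑ b, ntr ((P b)ᴴ * v) • P b = v := by
  induction hv using Submodule.span_induction with
  | mem x hx =>
    obtain ⟨a, rfl⟩ := hx
    simp only [hP]
    rw [Finset.sum_eq_single a] <;> simp +contextual
  | zero => simp [ntr]
  | add x y hx hy ihx ihy =>
    simp only [Matrix.mul_add, ntr_add, add_smul, Finset.sum_add_distrib, ihx, ihy]
  | smul c x hx ih =>
    simp only [Matrix.mul_smul, ntr_smul, smul_smul, mul_comm, ← smul_smul, ← Finset.smul_sum, ih]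

lemma sum_norm_sq_ofReal {κ : Type*} [Fintype κ] (u : κ → ℂ) :
    ((∑ b, ‖u b‖^2 : ℝ) : ℂ) = ∑ b, u b * star (u b) := by
  push_cast
  refine Finset.sum_congr rfl fun b _ => ?_
  rw [Complex.star_def, Complex.mul_conj, Complex.normSq_eq_norm_sq]
  push_cast
  ring

lemma sum_sq_inner_invariant {κ₁ κ₂ : Type*} [Fintype κ₁] [DecidableEq κ₁]
    [Fintype κ₂] [DecidableEq κ₂]
    (P : κ₁ → Matrix (Λ → Fin d) (Λ → Fin d) ℂ) (P' : κ₂ → Matrix (Λ → Fin d) (Λ → Fin d) ℂ)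
    (hPo : ∀ a a', ntr ((P a)ᴴ * P a') = if a = a' then 1 else 0)
    (hP'o : ∀ a a', ntr ((P' a)ᴴ * P' a') = if a = a' then 1 else 0)
    (hspan : Submodule.span ℂ (Set.range P) = Submodule.span ℂ (Set.range P'))
    (X : Matrix (Λ → Fin d) (Λ → Fin d) ℂ) :
    ∑ b : κ₂, ‖ntr (Xᴴ * P' b)‖^2 = ∑ b : κ₁, ‖ntr (Xᴴ * P b)‖^2 := by
  set u : κ₁ → ℂ := fun b => ntr (Xᴴ * P b) with hu
  set V : κ₂ → κ₁ → ℂ := fun c b => ntr ((P b)ᴴ * P' c) with hV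
  have hmem : ∀ c, P' c ∈ Submodule.span ℂ (Set.range P) := fun c => by
    rw [hspan]; exact Submodule.subset_span ⟨c, rfl⟩
  have hmem' : ∀ b, P b ∈ Submodule.span ℂ (Set.range P') := fun b => by
    rw [← hspan]; exact Submodule.subset_span ⟨b, rfl⟩
  have hexp : ∀ c, ntr (Xᴴ * P' c) = ∑ b, V c b * u b := by
    intro c
    conv_lhs => rw [← onb_expand P hPo (hmem c)]
    rw [Matrix.mul_sum, ntr_sum]
    exact Finset.sum_congr rfl fun b _ => by
      rw [Matrix.mul_smul, ntr_smul]
  have hdelta : ∀ b b', ∑ c, V c b * star (V c b') = if b = b' then 1 else 0 := by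
    intro b b'
    have : ∀ c, V c b * star (V c b') = ntr ((P b)ᴴ * (ntr ((P' c)ᴴ * P b') • P' c)) := by
      intro c
      rw [Matrix.mul_smul, ntr_smul, hV]
      simp only [star_ntr_mul]
      ring
    rw [Finset.sum_congr rfl fun c _ => this c, ← ntr_sum, ← Matrix.mul_sum,
      onb_expand P' hP'o (hmem' b'), hPo]
  have key : ∑ c : κ₂, ntr (Xᴴ * P' c) * star (ntr (Xᴴ * P' c))
      = ∑ b : κ₁, u b * star (u b) := by
    calc ∑ c : κ₂, ntr (Xᴴ * P' c) * star (ntr (Xᴴ * P' c))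
        = ∑ c, ∑ b, ∑ b', (u b * star (u b')) * (V c b * star (V c b')) := by
          refine Finset.sum_congr rfl fun c _ => ?_
          rw [hexp c, star_sum, Finset.sum_mul_sum]
          refine Finset.sum_congr rfl fun b _ => Finset.sum_congr rfl fun b' _ => by
            rw [StarMul.star_mul]; ring
      _ = ∑ b, ∑ b', (u b * star (u b')) * (∑ c, V c b * star (V c b')) := by
          rw [Finset.sum_comm]
          refine Finset.sum_congr rfl fun b _ => ?_
          rw [Finset.sum_comm]
          exact Finset.sum_congr rfl fun b' _ => by rw [← Finset.mul_sum]
      _ = ∑ b, ∑ b', (u b * star (u b')) * (if b = b' then 1 else 0) := by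
          simp only [hdelta]
      _ = ∑ b : κ₁, u b * star (u b) := by
          simp
  have := sum_norm_sq_ofReal (fun c : κ₂ => ntr (Xᴴ * P' c))
  rw [key, ← sum_norm_sq_ofReal] at this
  exact_mod_cast this

def restr' (S : Finset Λ) (p : Λ → Fin d) : {x // x ∈ S} → Fin d := fun r => p r

def offEq' (S : Finset Λ) (p q : Λ → Fin d) : Prop := ∀ r ∉ S, p r = q r

instance (S : Finset Λ) (p q : Λ → Fin d) : Decidable (offEq' S p q) := by
  unfold offEq'; infer_instance

noncomputable def EE (S : Finset Λ) (σ τ : {x // x ∈ S} → Fin d) :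
    Matrix (Λ → Fin d) (Λ → Fin d) ℂ :=
  Matrix.of fun p q => if restr' S p = σ ∧ restr' S q = τ ∧ offEq' S p q then 1 else 0

def mrg (S : Finset Λ) (σ : {x // x ∈ S} → Fin d) (p : Λ → Fin d) : Λ → Fin d :=
  fun x => if h : x ∈ S then σ ⟨x, h⟩ else p x

lemma restr'_mrg (S : Finset Λ) (σ : {x // x ∈ S} → Fin d) (p : Λ → Fin d) :
    restr' S (mrg S σ p) = σ := by
  funext r
  simp [restr', mrg, r.2]

lemma eq_mrg_iff (S : Finset Λ) (τ : {x // x ∈ S} → Fin d) (r q : Λ → Fin d) :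
    (restr' S q = τ ∧ offEq' S r q) ↔ q = mrg S τ r := by
  constructor
  · rintro ⟨h1, h2⟩
    funext x
    by_cases hx : x ∈ S
    · rw [mrg, dif_pos hx]
      exact congrFun h1 ⟨x, hx⟩
    · rw [mrg, dif_neg hx]
      exact (h2 x hx).symm
  · rintro rfl
    refine ⟨restr'_mrg S τ r, fun x hx => ?_⟩
    rw [mrg, dif_neg hx]

lemma card_fun_compl (S : Finset Λ) :
    Fintype.card ({x // ¬ x ∈ S} → Fin d) = d ^ Sᶜ.card := by
  rw [Fintype.card_fun, Fintype.card_fin]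
  congr 1
  rw [Fintype.card_subtype]
  congr 1
  ext x
  simp

lemma sum_restr_eq (S : Finset Λ) (σ : {x // x ∈ S} → Fin d) :
    (∑ r : Λ → Fin d, if restr' S r = σ then (1:ℂ) else 0) = (d:ℂ) ^ Sᶜ.card := by
  classical
  rw [← Equiv.sum_comp (Equiv.piEquivPiSubtypeProd (· ∈ S) (fun _ => Fin d)).symm
    (fun r => if restr' S r = σ then (1:ℂ) else 0)]
  have hres : ∀ (gh : ({x // x ∈ S} → Fin d) × ({x // ¬ x ∈ S} → Fin d)),
      restr' S ((Equiv.piEquivPiSubtypeProd (· ∈ S) (fun _ => Fin d)).symm gh) = gh.1 := by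
    intro gh
    funext r
    simp [restr', Equiv.piEquivPiSubtypeProd, r.2]
  simp only [hres]
  rw [Fintype.sum_prod_type]
  have hinner : ∀ g : {x // x ∈ S} → Fin d,
      (∑ _h : {x // ¬ x ∈ S} → Fin d, if g = σ then (1:ℂ) else 0)
        = if g = σ then (d:ℂ) ^ Sᶜ.card else 0 := by
    intro g; split_ifs <;> simp [card_fun_compl S]
  simp only [hinner]
  rw [Finset.sum_ite_eq' Finset.univ σ (fun _ => (d:ℂ) ^ Sᶜ.card)]
  simp

lemma EE_trace_mul (S : Finset Λ) (σ τ σ' τ' : {x // x ∈ S} → Fin d) :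
    ((EE S σ τ)ᴴ * EE S σ' τ').trace
      = if σ = σ' ∧ τ = τ' then (d:ℂ) ^ Sᶜ.card else 0 := by
  classical
  have expand : ((EE S σ τ)ᴴ * EE S σ' τ').trace
      = ∑ p : Λ → Fin d, ∑ r : Λ → Fin d, star (EE S σ τ r p) * EE S σ' τ' r p := by
    simp [Matrix.trace, Matrix.diag, Matrix.mul_apply, Matrix.conjTranspose_apply]
  rw [expand]
  by_cases h : σ = σ' ∧ τ = τ'
  · obtain ⟨rfl, rfl⟩ := h
    rw [if_pos ⟨rfl, rfl⟩]
    have h1 : ∀ r p : Λ → Fin d, star (EE S σ τ r p) * EE S σ τ r p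
        = if restr' S r = σ then (if p = mrg S τ r then (1:ℂ) else 0) else 0 := by
      intro r p
      simp only [EE, Matrix.of_apply]
      split_ifs with hC hr hp hr hp
      · simp
      · exact absurd ((eq_mrg_iff S τ r p).mp ⟨hC.2.1, hC.2.2⟩) hp
      · exact absurd hC.1 hr
      · obtain ⟨ha, hb⟩ := (eq_mrg_iff S τ r p).mpr hp
        exact absurd ⟨hr, ha, hb⟩ hC
      · simp
      · simp
    rw [Finset.sum_comm]
    simp only [h1]
    rw [← sum_restr_eq S σ]
    refine Finset.sum_congr rfl fun r _ => ?_
    split_ifs with hr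
    · simp [Finset.sum_ite_eq']
    · simp
  · rw [if_neg h]
    refine Finset.sum_eq_zero fun p _ => Finset.sum_eq_zero fun r _ => ?_
    simp only [EE, Matrix.of_apply]
    split_ifs with h1 h2
    · exact absurd ⟨h1.1.symm.trans h2.1, h1.2.1.symm.trans h2.2.1⟩ h
    all_goals simp

noncomputable def cE (S : Finset Λ) (στ : ({x // x ∈ S} → Fin d) × ({x // x ∈ S} → Fin d)) :
    Matrix (Λ → Fin d) (Λ → Fin d) ℂ :=
  ((Real.sqrt ((d:ℝ) ^ S.card) : ℝ) : ℂ) • EE S στ.1 στ.2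

lemma cE_onb (hd : 1 ≤ d) (S : Finset Λ) (v w : ({x // x ∈ S} → Fin d) × ({x // x ∈ S} → Fin d)) :
    ntr ((cE S v)ᴴ * cE S w) = if v = w then 1 else 0 := by
  have hdc : ((d:ℂ)) ≠ 0 := by
    exact_mod_cast Nat.cast_ne_zero.mpr (by omega)
  have hsq : (((Real.sqrt ((d:ℝ) ^ S.card) : ℝ) : ℂ)) * (((Real.sqrt ((d:ℝ) ^ S.card) : ℝ) : ℂ))
      = (d:ℂ) ^ S.card := by
    rw [← Complex.ofReal_mul, Real.mul_self_sqrt (by positivity)]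
    push_cast
    ring
  rw [cE, cE, Matrix.conjTranspose_smul, Matrix.smul_mul, Matrix.mul_smul, smul_smul,
    ntr_smul, ntr, EE_trace_mul]
  rw [Complex.star_def, Complex.conj_ofReal, hsq]
  by_cases h : v = w
  · subst h
    rw [if_pos ⟨rfl, rfl⟩, if_pos rfl]
    rw [← mul_div_assoc, ← pow_add, Finset.card_add_card_compl,
      div_self (pow_ne_zero _ hdc)]
  · rw [if_neg (by rw [Prod.ext_iff] at h; tauto), if_neg h]
    simp

lemma EE_mem (S : Finset Λ) (σ τ : {x // x ∈ S} → Fin d) : EE S σ τ ∈ suppSubmodule Λ d S := by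
  constructor
  · rintro x y ⟨r, hr, hne⟩
    rw [EE, Matrix.of_apply, if_neg]
    rintro ⟨-, -, h3⟩
    exact hne (h3 r hr)
  · intro x y x' y' h1 h2 h3 h4
    have hx : restr' S x = restr' S x' := funext fun r => h1 r r.2
    have hy : restr' S y = restr' S y' := funext fun r => h2 r r.2
    rw [EE, Matrix.of_apply, Matrix.of_apply]
    exact if_congr (and_congr (by rw [hx])
      (and_congr (by rw [hy]) (iff_of_true h3 h4))) rfl rfl

lemma cE_mem (S : Finset Λ) (στ : _ × _) : cE S στ ∈ suppSubmodule Λ d S :=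
  Submodule.smul_mem _ _ (EE_mem S στ.1 στ.2)

lemma span_cE (hd : 1 ≤ d) (S : Finset Λ) :
    Submodule.span ℂ (Set.range (cE S)) = suppSubmodule Λ d S := by
  apply le_antisymm
  · rw [Submodule.span_le]
    rintro _ ⟨στ, rfl⟩
    exact cE_mem S στ
  · intro M hM
    have hc : (((Real.sqrt ((d:ℝ) ^ S.card) : ℝ) : ℂ)) ≠ 0 := by
      have : (0:ℝ) < Real.sqrt ((d:ℝ) ^ S.card) := by positivity
      exact_mod_cast ne_of_gt this
    set c : ℂ := (((Real.sqrt ((d:ℝ) ^ S.card) : ℝ) : ℂ)) with hcdef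
    set dflt : Λ → Fin d := fun _ => ⟨0, hd⟩ with hdflt
    have key : M = ∑ στ : ({x // x ∈ S} → Fin d) × ({x // x ∈ S} → Fin d),
        (M (mrg S στ.1 dflt) (mrg S στ.2 dflt) * c⁻¹) • cE S στ := by
      have hsimp : ∀ στ : ({x // x ∈ S} → Fin d) × ({x // x ∈ S} → Fin d),
          (M (mrg S στ.1 dflt) (mrg S στ.2 dflt) * c⁻¹) • cE S στ
            = M (mrg S στ.1 dflt) (mrg S στ.2 dflt) • EE S στ.1 στ.2 := by
        intro στ
        rw [cE, smul_smul, mul_assoc, inv_mul_cancel₀ hc, mul_one]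
      simp only [hsimp]
      funext p q
      rw [Matrix.sum_apply]
      simp only [Matrix.smul_apply, smul_eq_mul]
      by_cases hpq : offEq' S p q
      · have hEE : ∀ στ : ({x // x ∈ S} → Fin d) × ({x // x ∈ S} → Fin d),
            EE S στ.1 στ.2 p q = if στ = (restr' S p, restr' S q) then (1:ℂ) else 0 := by
          intro στ
          rw [EE, Matrix.of_apply]
          refine if_congr ?_ rfl rfl
          rw [Prod.ext_iff]
          exact ⟨fun ⟨h1, h2, _⟩ => ⟨h1.symm, h2.symm⟩,
            fun ⟨h1, h2⟩ => ⟨h1.symm, h2.symm, hpq⟩⟩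
        simp only [hEE, mul_ite, mul_one, mul_zero, Finset.sum_ite_eq',
          Finset.mem_univ, if_true]
        exact hM.2 p q _ _ (fun r hr => by simp only [mrg, dif_pos hr]; rfl)
          (fun r hr => by simp only [mrg, dif_pos hr]; rfl) hpq
          (fun r hr => by simp only [mrg, dif_neg hr])
      · have hpq' : ∃ r ∉ S, p r ≠ q r := by
          unfold offEq' at hpq
          push_neg at hpq
          obtain ⟨r, hr, hne⟩ := hpq
          exact ⟨r, hr, hne⟩
        rw [hM.1 p q hpq']
        symm
        refine Finset.sum_eq_zero fun στ _ => ?_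
        rw [EE, Matrix.of_apply, if_neg (by rintro ⟨-, -, h3⟩; exact hpq h3), mul_zero]
    rw [key]
    exact Submodule.sum_mem _ fun στ _ =>
      Submodule.smul_mem _ _ (Submodule.subset_span ⟨στ, rfl⟩)

noncomputable def cEU (U : Matrix (Λ → Fin d) (Λ → Fin d) ℂ) (S : Finset Λ)
    (στ : ({x // x ∈ S} → Fin d) × ({x // x ∈ S} → Fin d)) :
    Matrix (Λ → Fin d) (Λ → Fin d) ℂ :=
  Uᴴ * cE S στ * U

lemma ntr_unitary_conj (U : Matrix (Λ → Fin d) (Λ → Fin d) ℂ) (hU2 : U * Uᴴ = 1)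
    (X : Matrix (Λ → Fin d) (Λ → Fin d) ℂ) : ntr (Uᴴ * X * U) = ntr X := by
  unfold ntr
  rw [Matrix.trace_mul_cycle, hU2, Matrix.one_mul]

lemma conj_mul_conj (U X Y : Matrix (Λ → Fin d) (Λ → Fin d) ℂ) (hU2 : U * Uᴴ = 1) :
    (Uᴴ * X * U)ᴴ * (Uᴴ * Y * U) = Uᴴ * (Xᴴ * Y) * U := by
  have h : U * (Uᴴ * (Y * U)) = Y * U := by rw [← Matrix.mul_assoc, hU2, Matrix.one_mul]
  simp only [Matrix.conjTranspose_mul, Matrix.conjTranspose_conjTranspose, Matrix.mul_assoc, h]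

lemma cEU_onb (hd : 1 ≤ d) (U : Matrix (Λ → Fin d) (Λ → Fin d) ℂ) (hU2 : U * Uᴴ = 1)
    (S : Finset Λ) (v w : ({x // x ∈ S} → Fin d) × ({x // x ∈ S} → Fin d)) :
    ntr ((cEU U S v)ᴴ * cEU U S w) = if v = w then 1 else 0 := by
  rw [cEU, cEU, conj_mul_conj U _ _ hU2, ntr_unitary_conj U hU2, cE_onb hd S v w]

lemma span_cEU (hd : 1 ≤ d) (U : Matrix (Λ → Fin d) (Λ → Fin d) ℂ) (S : Finset Λ) :
    Submodule.span ℂ (Set.range (cEU U S))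
      = Submodule.map (conjLM U) (suppSubmodule Λ d S) := by
  rw [← span_cE hd S, Submodule.map_span, ← Set.range_comp]
  rfl

noncomputable def Rind (S : Finset Λ) (c b c' b' : Λ → Fin d) : ℂ :=
  if restr' S c = restr' S c' ∧ restr' S b = restr' S b' ∧ offEq' S c b ∧ offEq' S c' b'
  then 1 else 0

lemma restr'_eq_iff (S : Finset Λ) (p q : Λ → Fin d) :
    restr' S p = restr' S q ↔ ∀ r ∈ S, p r = q r := by
  constructor
  · intro h r hr; exact congrFun h ⟨r, hr⟩
  · intro h; funext r; exact h r r.2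

lemma compl_restr (S : Finset Λ) (p q : Λ → Fin d) :
    restr' Sᶜ p = restr' Sᶜ q ↔ offEq' S p q := by
  rw [restr'_eq_iff]
  unfold offEq'
  constructor
  · intro h r hr; exact h r (Finset.mem_compl.mpr hr)
  · intro h r hr; exact h r (Finset.mem_compl.mp hr)

lemma compl_offEq (S : Finset Λ) (p q : Λ → Fin d) :
    offEq' Sᶜ p q ↔ restr' S p = restr' S q := by
  rw [restr'_eq_iff]
  unfold offEq'
  constructor
  · intro h r hr; exact h r (by simp [hr])
  · intro h r hr; exact h r (by simpa using hr)

lemma Rind_compl (S : Finset Λ) (c b c' b' : Λ → Fin d) :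
    Rind Sᶜ c c' b b' = Rind S c b c' b' := by
  unfold Rind
  refine if_congr ?_ rfl rfl
  rw [compl_restr, compl_restr, compl_offEq, compl_offEq]
  tauto

lemma sum_EE_pair (S : Finset Λ) (c b c' b' : Λ → Fin d) :
    ∑ στ : ({x // x ∈ S} → Fin d) × ({x // x ∈ S} → Fin d),
      EE S στ.1 στ.2 c b * EE S στ.1 στ.2 c' b' = Rind S c b c' b' := by
  classical
  have key : ∀ στ : ({x // x ∈ S} → Fin d) × ({x // x ∈ S} → Fin d),
      ((restr' S c = στ.1 ∧ restr' S b = στ.2 ∧ offEq' S c b) ∧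
       (restr' S c' = στ.1 ∧ restr' S b' = στ.2 ∧ offEq' S c' b'))
      ↔ (στ = (restr' S c, restr' S b) ∧
         (restr' S c = restr' S c' ∧ restr' S b = restr' S b' ∧ offEq' S c b ∧ offEq' S c' b')) := by
    intro στ
    rw [Prod.ext_iff]
    constructor
    · rintro ⟨⟨e1, e2, e3⟩, f1, f2, f3⟩
      exact ⟨⟨e1.symm, e2.symm⟩, e1.trans f1.symm, e2.trans f2.symm, e3, f3⟩
    · rintro ⟨⟨p1, p2⟩, g1, g2, g3, g4⟩
      exact ⟨⟨p1.symm, p2.symm, g3⟩, g1.symm.trans p1.symm, g2.symm.trans p2.symm, g4⟩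
  have hterm : ∀ στ : ({x // x ∈ S} → Fin d) × ({x // x ∈ S} → Fin d),
      EE S στ.1 στ.2 c b * EE S στ.1 στ.2 c' b'
        = if στ = (restr' S c, restr' S b) then Rind S c b c' b' else 0 := by
    intro στ
    simp only [EE, Matrix.of_apply, Rind, ite_zero_mul_ite_zero, one_mul]
    rw [if_congr (key στ) rfl rfl, ite_and]
  simp only [hterm]
  rw [Finset.sum_ite_eq' Finset.univ (restr' S c, restr' S b) (fun _ => Rind S c b c' b')]
  simp
open Matrix
lemma trace_mul_four {n : Type*} [Fintype n] (M N P Q : Matrix n n ℂ) :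
    (M * N * P * Q).trace = ∑ a, ∑ b, ∑ c, ∑ e, M a b * N b c * P c e * Q e a := by
  simp only [Matrix.trace, Matrix.diag, Matrix.mul_apply, Finset.sum_mul, Finset.mul_sum]
  refine Finset.sum_congr rfl fun a _ => ?_
  calc (∑ e : n, ∑ c : n, ∑ b : n, M a b * N b c * P c e * Q e a)
      = ∑ c : n, ∑ e : n, ∑ b : n, M a b * N b c * P c e * Q e a := Finset.sum_comm
    _ = ∑ c : n, ∑ b : n, ∑ e : n, M a b * N b c * P c e * Q e a :=
        Finset.sum_congr rfl fun c _ => Finset.sum_comm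
    _ = ∑ b : n, ∑ c : n, ∑ e : n, M a b * N b c * P c e * Q e a := Finset.sum_comm

abbrev Tq (Λ : Type*) (d : ℕ) := (Λ → Fin d) × (Λ → Fin d) × (Λ → Fin d) × (Λ → Fin d)

lemma star_EE (S : Finset Λ) (σ τ : {x // x ∈ S} → Fin d) (p q : Λ → Fin d) :
    star (EE S σ τ p q) = EE S σ τ p q := by
  simp only [EE, Matrix.of_apply]
  split_ifs <;> simp

noncomputable def gfun (U : Matrix (Λ → Fin d) (Λ → Fin d) ℂ) (A B : Finset Λ)
    (v : ({x // x ∈ A} → Fin d) × ({x // x ∈ A} → Fin d))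
    (w : ({x // x ∈ B} → Fin d) × ({x // x ∈ B} → Fin d))
    (x : Tq Λ d) : ℂ :=
  star (U x.2.1 x.1) * EE A v.1 v.2 x.2.2.1 x.2.1 * U x.2.2.1 x.2.2.2
    * EE B w.1 w.2 x.2.2.2 x.1

noncomputable def WW (U : Matrix (Λ → Fin d) (Λ → Fin d) ℂ) (A B : Finset Λ)
    (x y : Tq Λ d) : ℂ :=
  (star (U x.2.1 x.1) * U x.2.2.1 x.2.2.2) * star (star (U y.2.1 y.1) * U y.2.2.1 y.2.2.2)
    * Rind A x.2.2.1 x.2.1 y.2.2.1 y.2.1 * Rind B x.2.2.2 x.1 y.2.2.2 y.1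

lemma ntr_conjEE (U : Matrix (Λ → Fin d) (Λ → Fin d) ℂ) (A B : Finset Λ)
    (v : ({x // x ∈ A} → Fin d) × ({x // x ∈ A} → Fin d))
    (w : ({x // x ∈ B} → Fin d) × ({x // x ∈ B} → Fin d)) :
    ntr ((Uᴴ * EE A v.1 v.2 * U)ᴴ * EE B w.1 w.2)
      = (∑ x : Tq Λ d, gfun U A B v w x) / (d:ℂ) ^ Fintype.card Λ := by
  have hassoc : (Uᴴ * EE A v.1 v.2 * U)ᴴ * EE B w.1 w.2
      = Uᴴ * (EE A v.1 v.2)ᴴ * U * EE B w.1 w.2 := by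
    rw [Matrix.conjTranspose_mul (Uᴴ * EE A v.1 v.2) U,
      Matrix.conjTranspose_mul Uᴴ (EE A v.1 v.2), Matrix.conjTranspose_conjTranspose]
    simp only [Matrix.mul_assoc]
  rw [ntr, hassoc, trace_mul_four]
  congr 1
  rw [Fintype.sum_prod_type]
  refine Finset.sum_congr rfl fun a _ => ?_
  rw [Fintype.sum_prod_type]
  refine Finset.sum_congr rfl fun b _ => ?_
  rw [Fintype.sum_prod_type]
  refine Finset.sum_congr rfl fun c _ => Finset.sum_congr rfl fun e _ => ?_
  simp only [gfun, Matrix.conjTranspose_apply, star_EE]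

lemma num_sq (U : Matrix (Λ → Fin d) (Λ → Fin d) ℂ) (A B : Finset Λ) :
    ∑ v : ({x // x ∈ A} → Fin d) × ({x // x ∈ A} → Fin d),
      ∑ w : ({x // x ∈ B} → Fin d) × ({x // x ∈ B} → Fin d),
        (∑ x : Tq Λ d, gfun U A B v w x) * star (∑ y : Tq Λ d, gfun U A B v w y)
    = ∑ x : Tq Λ d, ∑ y : Tq Λ d, WW U A B x y := by
  have step1 : ∀ v w, (∑ x : Tq Λ d, gfun U A B v w x) * star (∑ y : Tq Λ d, gfun U A B v w y)
      = ∑ x : Tq Λ d, ∑ y : Tq Λ d, gfun U A B v w x * star (gfun U A B v w y) := by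
    intro v w
    rw [star_sum, Finset.sum_mul_sum]
  simp only [step1]
  set F := fun (v : ({x // x ∈ A} → Fin d) × ({x // x ∈ A} → Fin d))
    (w : ({x // x ∈ B} → Fin d) × ({x // x ∈ B} → Fin d)) (x y : Tq Λ d) =>
      gfun U A B v w x * star (gfun U A B v w y) with hF
  calc ∑ v, ∑ w, ∑ x, ∑ y, F v w x y
      = ∑ v, ∑ x, ∑ w, ∑ y, F v w x y :=
        Finset.sum_congr rfl fun v _ => Finset.sum_comm
    _ = ∑ x, ∑ v, ∑ w, ∑ y, F v w x y := Finset.sum_comm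
    _ = ∑ x, ∑ v, ∑ y, ∑ w, F v w x y :=
        Finset.sum_congr rfl fun x _ => Finset.sum_congr rfl fun v _ => Finset.sum_comm
    _ = ∑ x, ∑ y, ∑ v, ∑ w, F v w x y :=
        Finset.sum_congr rfl fun x _ => Finset.sum_comm
    _ = ∑ x : Tq Λ d, ∑ y : Tq Λ d, WW U A B x y := ?_
  refine Finset.sum_congr rfl fun x _ => Finset.sum_congr rfl fun y _ => ?_
  have hFval : ∀ (v : ({x // x ∈ A} → Fin d) × ({x // x ∈ A} → Fin d))
      (w : ({x // x ∈ B} → Fin d) × ({x // x ∈ B} → Fin d)), F v w x y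
      = (EE A v.1 v.2 x.2.2.1 x.2.1 * EE A v.1 v.2 y.2.2.1 y.2.1)
        * (EE B w.1 w.2 x.2.2.2 x.1 * EE B w.1 w.2 y.2.2.2 y.1)
        * ((star (U x.2.1 x.1) * U x.2.2.1 x.2.2.2)
            * star (star (U y.2.1 y.1) * U y.2.2.1 y.2.2.2)) := by
    intro v w
    simp only [hF, gfun, StarMul.star_mul, star_star, star_EE]
    ring
  simp only [hFval]
  have hinner : ∀ v : ({x // x ∈ A} → Fin d) × ({x // x ∈ A} → Fin d), ∑ w : ({x // x ∈ B} → Fin d) × ({x // x ∈ B} → Fin d),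
      (EE A v.1 v.2 x.2.2.1 x.2.1 * EE A v.1 v.2 y.2.2.1 y.2.1)
        * (EE B w.1 w.2 x.2.2.2 x.1 * EE B w.1 w.2 y.2.2.2 y.1)
        * ((star (U x.2.1 x.1) * U x.2.2.1 x.2.2.2)
            * star (star (U y.2.1 y.1) * U y.2.2.1 y.2.2.2))
      = (EE A v.1 v.2 x.2.2.1 x.2.1 * EE A v.1 v.2 y.2.2.1 y.2.1)
        * Rind B x.2.2.2 x.1 y.2.2.2 y.1
        * ((star (U x.2.1 x.1) * U x.2.2.1 x.2.2.2)
            * star (star (U y.2.1 y.1) * U y.2.2.1 y.2.2.2)) := by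
    intro v
    rw [← Finset.sum_mul, ← Finset.mul_sum, sum_EE_pair]
  simp only [hinner]
  rw [← Finset.sum_mul, ← Finset.sum_mul, sum_EE_pair, WW]
  ring

lemma WW_reindex (U : Matrix (Λ → Fin d) (Λ → Fin d) ℂ) (A B : Finset Λ) (p : Tq Λ d × Tq Λ d) :
    WW U Aᶜ Bᶜ (p.2.2.2.2, p.2.2.2.1, p.1.2.2.1, p.1.2.2.2) (p.2.1, p.2.2.1, p.1.2.1, p.1.1)
      = WW U A B p.1 p.2 := by
  obtain ⟨⟨a, b, c, e⟩, ⟨a', b', c', e'⟩⟩ := p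
  simp only [WW, Rind_compl, StarMul.star_mul, star_star]
  ring

def mT4 (Λ : Type*) (d : ℕ) : (Tq Λ d × Tq Λ d) → (Tq Λ d × Tq Λ d) := fun p =>
  ((p.2.2.2.2, p.2.2.2.1, p.1.2.2.1, p.1.2.2.2), (p.2.1, p.2.2.1, p.1.2.1, p.1.1))

lemma mT4_invol : Function.Involutive (mT4 Λ d) := by
  rintro ⟨⟨a, b, c, e⟩, ⟨a', b', c', e'⟩⟩
  rfl

lemma WW_sum_compl (U : Matrix (Λ → Fin d) (Λ → Fin d) ℂ) (A B : Finset Λ) :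
    ∑ x : Tq Λ d, ∑ y : Tq Λ d, WW U A B x y
      = ∑ x : Tq Λ d, ∑ y : Tq Λ d, WW U Aᶜ Bᶜ x y := by
  have h1 : ∀ C D : Finset Λ, (∑ p : Tq Λ d × Tq Λ d, WW U C D p.1 p.2)
      = ∑ x : Tq Λ d, ∑ y : Tq Λ d, WW U C D x y := fun C D => Fintype.sum_prod_type _
  rw [← h1 A B, ← h1 Aᶜ Bᶜ]
  calc ∑ p : Tq Λ d × Tq Λ d, WW U A B p.1 p.2
      = ∑ p : Tq Λ d × Tq Λ d, WW U Aᶜ Bᶜ ((mT4 Λ d) p).1 ((mT4 Λ d) p).2 :=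
        Finset.sum_congr rfl fun p _ => (WW_reindex U A B p).symm
    _ = ∑ p : Tq Λ d × Tq Λ d, WW U Aᶜ Bᶜ p.1 p.2 :=
        Equiv.sum_comp (mT4_invol).toPerm (fun p => WW U Aᶜ Bᶜ p.1 p.2)

lemma norm_sq_complex (z : ℂ) : (((‖z‖:ℝ) : ℂ))^2 = z * star z := by
  rw [← Complex.ofReal_pow, Complex.star_def, Complex.mul_conj, Complex.normSq_eq_norm_sq]

lemma TT_cast (U : Matrix (Λ → Fin d) (Λ → Fin d) ℂ) (C D : Finset Λ) :
    ((∑ v : ({x // x ∈ C} → Fin d) × ({x // x ∈ C} → Fin d),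
      ∑ w : ({x // x ∈ D} → Fin d) × ({x // x ∈ D} → Fin d),
        ‖ntr ((Uᴴ * EE C v.1 v.2 * U)ᴴ * EE D w.1 w.2)‖ ^ 2 : ℝ) : ℂ)
    = (∑ x : Tq Λ d, ∑ y : Tq Λ d, WW U C D x y)
        / ((d:ℂ) ^ Fintype.card Λ * (d:ℂ) ^ Fintype.card Λ) := by
  push_cast
  simp only [norm_sq_complex]
  have hz : ∀ (v : ({x // x ∈ C} → Fin d) × ({x // x ∈ C} → Fin d))
      (w : ({x // x ∈ D} → Fin d) × ({x // x ∈ D} → Fin d)),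
      ntr ((Uᴴ * EE C v.1 v.2 * U)ᴴ * EE D w.1 w.2)
        * star (ntr ((Uᴴ * EE C v.1 v.2 * U)ᴴ * EE D w.1 w.2))
      = ((∑ x : Tq Λ d, gfun U C D v w x) * star (∑ y : Tq Λ d, gfun U C D v w y))
        / ((d:ℂ) ^ Fintype.card Λ * (d:ℂ) ^ Fintype.card Λ) := by
    intro v w
    rw [ntr_conjEE, star_div₀, div_mul_div_comm]
    congr 2
    simp
  simp only [hz, ← Finset.sum_div]
  rw [num_sq]

lemma TT_compl (U : Matrix (Λ → Fin d) (Λ → Fin d) ℂ) (A B : Finset Λ) :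
    (∑ v : ({x // x ∈ A} → Fin d) × ({x // x ∈ A} → Fin d),
      ∑ w : ({x // x ∈ B} → Fin d) × ({x // x ∈ B} → Fin d),
        ‖ntr ((Uᴴ * EE A v.1 v.2 * U)ᴴ * EE B w.1 w.2)‖ ^ 2)
    = ∑ v : ({x // x ∈ Aᶜ} → Fin d) × ({x // x ∈ Aᶜ} → Fin d),
      ∑ w : ({x // x ∈ Bᶜ} → Fin d) × ({x // x ∈ Bᶜ} → Fin d),
        ‖ntr ((Uᴴ * EE Aᶜ v.1 v.2 * U)ᴴ * EE Bᶜ w.1 w.2)‖ ^ 2 := by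
  apply Complex.ofReal_injective
  rw [TT_cast U A B, TT_cast U Aᶜ Bᶜ, WW_sum_compl U A B]

lemma scaled_term (U : Matrix (Λ → Fin d) (Λ → Fin d) ℂ) (A B : Finset Λ)
    (v : ({x // x ∈ A} → Fin d) × ({x // x ∈ A} → Fin d))
    (w : ({x // x ∈ B} → Fin d) × ({x // x ∈ B} → Fin d)) :
    ‖ntr ((cEU U A v)ᴴ * cE B w)‖ ^ 2
      = (d:ℝ)^A.card * (d:ℝ)^B.card
        * ‖ntr ((Uᴴ * EE A v.1 v.2 * U)ᴴ * EE B w.1 w.2)‖ ^ 2 := by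
  have h1 : (cEU U A v)ᴴ * cE B w
      = (((Real.sqrt ((d:ℝ)^A.card) : ℝ) : ℂ) * ((Real.sqrt ((d:ℝ)^B.card) : ℝ) : ℂ))
        • ((Uᴴ * EE A v.1 v.2 * U)ᴴ * EE B w.1 w.2) := by
    simp only [cEU, cE, Matrix.mul_smul, Matrix.smul_mul, Matrix.conjTranspose_smul,
      Complex.star_def, Complex.conj_ofReal, smul_smul]
    rw [mul_comm]
  rw [h1, ntr_smul, norm_mul, mul_pow, norm_mul, mul_pow, Complex.norm_real,
    Complex.norm_real, Real.norm_eq_abs, Real.norm_eq_abs, sq_abs, sq_abs,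
    Real.sq_sqrt (by positivity), Real.sq_sqrt (by positivity)]

lemma eta_to_concrete (hd : 1 ≤ d) (U : Matrix (Λ → Fin d) (Λ → Fin d) ℂ) (hU2 : U * Uᴴ = 1)
    (A B : Finset Λ) {ι₁ κ₁ : Type} [Fintype ι₁] [DecidableEq ι₁] [Fintype κ₁] [DecidableEq κ₁]
    (O : ι₁ → Matrix (Λ → Fin d) (Λ → Fin d) ℂ) (P : κ₁ → Matrix (Λ → Fin d) (Λ → Fin d) ℂ)
    (hO : IsONBasisOf O (Submodule.map (conjLM U) (suppSubmodule Λ d A)))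
    (hP : IsONBasisOf P (suppSubmodule Λ d B)) :
    ∑ a : ι₁, ∑ b : κ₁, ‖ntr ((O a)ᴴ * P b)‖ ^ 2
      = (d:ℝ)^A.card * (d:ℝ)^B.card *
        ∑ v : ({x // x ∈ A} → Fin d) × ({x // x ∈ A} → Fin d),
          ∑ w : ({x // x ∈ B} → Fin d) × ({x // x ∈ B} → Fin d),
            ‖ntr ((Uᴴ * EE A v.1 v.2 * U)ᴴ * EE B w.1 w.2)‖ ^ 2 := by
  calc ∑ a : ι₁, ∑ b : κ₁, ‖ntr ((O a)ᴴ * P b)‖ ^ 2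
      = ∑ a : ι₁, ∑ w : ({x // x ∈ B} → Fin d) × ({x // x ∈ B} → Fin d),
          ‖ntr ((O a)ᴴ * cE B w)‖ ^ 2 :=
        Finset.sum_congr rfl fun a _ =>
          sum_sq_inner_invariant (cE B) P (cE_onb hd B) hP.2.1
            ((span_cE hd B).trans hP.2.2.symm) (O a)
    _ = ∑ w : ({x // x ∈ B} → Fin d) × ({x // x ∈ B} → Fin d), ∑ a : ι₁,
          ‖ntr ((cE B w)ᴴ * O a)‖ ^ 2 := by
        rw [Finset.sum_comm]
        exact Finset.sum_congr rfl fun w _ => Finset.sum_congr rfl fun a _ => by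
          rw [norm_ntr_comm]
    _ = ∑ w : ({x // x ∈ B} → Fin d) × ({x // x ∈ B} → Fin d),
          ∑ v : ({x // x ∈ A} → Fin d) × ({x // x ∈ A} → Fin d),
          ‖ntr ((cE B w)ᴴ * cEU U A v)‖ ^ 2 :=
        Finset.sum_congr rfl fun w _ =>
          sum_sq_inner_invariant (cEU U A) O (cEU_onb hd U hU2 A) hO.2.1
            ((span_cEU hd U A).trans hO.2.2.symm) (cE B w)
    _ = ∑ v : ({x // x ∈ A} → Fin d) × ({x // x ∈ A} → Fin d),
          ∑ w : ({x // x ∈ B} → Fin d) × ({x // x ∈ B} → Fin d),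
          ‖ntr ((cEU U A v)ᴴ * cE B w)‖ ^ 2 := by
        rw [Finset.sum_comm]
        exact Finset.sum_congr rfl fun v _ => Finset.sum_congr rfl fun w _ => by
          rw [norm_ntr_comm]
    _ = ∑ v : ({x // x ∈ A} → Fin d) × ({x // x ∈ A} → Fin d),
          ∑ w : ({x // x ∈ B} → Fin d) × ({x // x ∈ B} → Fin d),
          (d:ℝ)^A.card * (d:ℝ)^B.card
            * ‖ntr ((Uᴴ * EE A v.1 v.2 * U)ᴴ * EE B w.1 w.2)‖ ^ 2 :=
        Finset.sum_congr rfl fun v _ => Finset.sum_congr rfl fun w _ => scaled_term U A B v w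
    _ = (d:ℝ)^A.card * (d:ℝ)^B.card *
        ∑ v : ({x // x ∈ A} → Fin d) × ({x // x ∈ A} → Fin d),
          ∑ w : ({x // x ∈ B} → Fin d) × ({x // x ∈ B} → Fin d),
            ‖ntr ((Uᴴ * EE A v.1 v.2 * U)ᴴ * EE B w.1 w.2)‖ ^ 2 := by
        simp only [Finset.mul_sum]

/-- `η(Uᴴ𝒜_A U, 𝒜_B) = d^{|A|+|B|−N} · η(Uᴴ𝒜_{Λ∖A}U, 𝒜_{Λ∖B})`, where `η` is computed from
any orthonormal bases of the respective subspaces. -/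
theorem eta_complement (hd : 1 ≤ d)
    (U : Matrix (Λ → Fin d) (Λ → Fin d) ℂ) (hU : Uᴴ * U = 1 ∧ U * Uᴴ = 1)
    (A B : Finset Λ)
    {ι₁ κ₁ ι₂ κ₂ : Type} [Fintype ι₁] [DecidableEq ι₁] [Fintype κ₁] [DecidableEq κ₁]
    [Fintype ι₂] [DecidableEq ι₂] [Fintype κ₂] [DecidableEq κ₂]
    (O : ι₁ → Matrix (Λ → Fin d) (Λ → Fin d) ℂ)
    (P : κ₁ → Matrix (Λ → Fin d) (Λ → Fin d) ℂ)
    (O' : ι₂ → Matrix (Λ → Fin d) (Λ → Fin d) ℂ)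
    (P' : κ₂ → Matrix (Λ → Fin d) (Λ → Fin d) ℂ)
    (hO : IsONBasisOf O (Submodule.map (conjLM U) (suppSubmodule Λ d A)))
    (hP : IsONBasisOf P (suppSubmodule Λ d B))
    (hO' : IsONBasisOf O' (Submodule.map (conjLM U) (suppSubmodule Λ d Aᶜ)))
    (hP' : IsONBasisOf P' (suppSubmodule Λ d Bᶜ)) :
    Real.sqrt (∑ a : ι₁, ∑ b : κ₁, ‖ntr ((O a)ᴴ * P b)‖ ^ 2) =
      (d : ℝ) ^ ((A.card : ℤ) + (B.card : ℤ) - (Fintype.card Λ : ℤ)) *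
        Real.sqrt (∑ a : ι₂, ∑ b : κ₂, ‖ntr ((O' a)ᴴ * P' b)‖ ^ 2) := by
  obtain ⟨hU1, hU2⟩ := hU
  rw [eta_to_concrete hd U hU2 A B O P hO hP, eta_to_concrete hd U hU2 Aᶜ Bᶜ O' P' hO' hP',
    TT_compl U A B]
  have hdpos : (0:ℝ) < d := by exact_mod_cast Nat.lt_of_lt_of_le Nat.zero_lt_one hd
  have hne : (d:ℝ) ≠ 0 := ne_of_gt hdpos
  have hm0 : (0:ℝ) ≤ (d:ℝ) ^ ((A.card : ℤ) + (B.card : ℤ) - (Fintype.card Λ : ℤ)) := by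
    positivity
  rw [← Real.sqrt_sq hm0, ← Real.sqrt_mul (sq_nonneg _)]
  congr 1
  have h1 : ((Aᶜ.card : ℕ) : ℤ) = (Fintype.card Λ : ℤ) - (A.card : ℤ) := by
    rw [Finset.card_compl, Nat.cast_sub (Finset.card_le_univ A)]
  have h2 : ((Bᶜ.card : ℕ) : ℤ) = (Fintype.card Λ : ℤ) - (B.card : ℤ) := by
    rw [Finset.card_compl, Nat.cast_sub (Finset.card_le_univ B)]
  have expo : (d:ℝ)^A.card * (d:ℝ)^B.card
      = ((d:ℝ) ^ ((A.card : ℤ) + (B.card : ℤ) - (Fintype.card Λ : ℤ)))^2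
        * ((d:ℝ)^(Aᶜ.card) * (d:ℝ)^(Bᶜ.card)) := by
    rw [← zpow_natCast (d:ℝ) A.card, ← zpow_natCast (d:ℝ) B.card,
      ← zpow_natCast (d:ℝ) Aᶜ.card, ← zpow_natCast (d:ℝ) Bᶜ.card, sq, h1, h2,
      ← zpow_add₀ hne, ← zpow_add₀ hne, ← zpow_add₀ hne, ← zpow_add₀ hne]
    congr 1
    ring
  rw [expo]
  ring
end

section
/- Let H be an n×n complex matrix with Hᴴ = H and H·H = H, and let P_I, P_J, P_K be Hermitian idempotent n×n matrices with P_I·P_J = 0, P_J·P_K = 0, and P_K·P_I = 0. Then ∫₀^{2π} Tr( exp(i t H) · (P_K H P_I − P_I H P_K) · exp(−i t H) · P_J ) dt = 4π · Tr( H P_K H P_I H P_J − H P_I H P_K H P_J ). -/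
open Matrix

set_option maxHeartbeats 1000000 in
private lemma exp_smul_idem {n : ℕ} (M : Matrix (Fin n) (Fin n) ℂ) (hM : M * M = M)
    (c : ℂ) :
    NormedSpace.exp (c • M) = 1 + (Complex.exp c - 1) • M := by
  letI : SeminormedRing (Matrix (Fin n) (Fin n) ℂ) := Matrix.linftyOpSemiNormedRing
  letI : NormedRing (Matrix (Fin n) (Fin n) ℂ) := Matrix.linftyOpNormedRing
  letI : NormedAlgebra ℂ (Matrix (Fin n) (Fin n) ℂ) := Matrix.linftyOpNormedAlgebra
  have hMpow : ∀ k : ℕ, M ^ (k + 1) = M := by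
    intro k
    induction k with
    | zero => simp
    | succ k ih => rw [pow_succ, ih, hM]
  have hs : Summable (fun k : ℕ => ((Nat.factorial k : ℂ))⁻¹ • (c • M) ^ k) :=
    NormedSpace.expSeries_summable' (c • M)
  have hsc : Summable (fun k : ℕ => ((Nat.factorial k : ℂ))⁻¹ • c ^ k) :=
    NormedSpace.expSeries_summable' (𝕂 := ℂ) c
  have key : (fun k : ℕ => ((Nat.factorial (k+1) : ℂ))⁻¹ • (c • M) ^ (k + 1)) =
      fun k : ℕ => (((Nat.factorial (k+1) : ℂ))⁻¹ • c ^ (k + 1)) • M := by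
    funext k
    rw [smul_pow, hMpow, smul_smul, smul_eq_mul]
  simp only [NormedSpace.exp_eq_tsum (𝕂 := ℂ)]
  rw [Summable.tsum_eq_zero_add hs, key, Summable.tsum_smul_const]
  · have hc : Complex.exp c = ∑' k : ℕ, ((Nat.factorial k : ℂ))⁻¹ • c ^ k := by
      rw [Complex.exp_eq_exp_ℂ, NormedSpace.exp_eq_tsum (𝕂 := ℂ)]
    rw [Summable.tsum_eq_zero_add hsc] at hc
    simp only [Nat.factorial_zero, pow_zero, Nat.cast_one, inv_one, one_smul] at hc ⊢
    have hS : Complex.exp c - 1 =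
        ∑' k : ℕ, ((Nat.factorial (k + 1) : ℂ))⁻¹ • c ^ (k + 1) := by
      rw [hc]; ring
    rw [hS]
  · exact (summable_nat_add_iff 1).2 hsc

/-- For a projector Hamiltonian `H` and mutually orthogonal projections `P_I, P_J, P_K`,
the time-integrated current `∫₀^{2π} Tr(e^{itH}(P_K H P_I − P_I H P_K)e^{−itH} P_J) dt`
equals `4π·Tr(H P_K H P_I H P_J − H P_I H P_K H P_J)`. -/
theorem integrated_current_projector {n : ℕ}
    (H PI PJ PK : Matrix (Fin n) (Fin n) ℂ)
    (hH : Hᴴ = H) (hH2 : H * H = H)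
    (hPI : PIᴴ = PI) (hPI2 : PI * PI = PI)
    (hPJ : PJᴴ = PJ) (hPJ2 : PJ * PJ = PJ)
    (hPK : PKᴴ = PK) (hPK2 : PK * PK = PK)
    (hIJ : PI * PJ = 0) (hJK : PJ * PK = 0) (hKI : PK * PI = 0) :
    ∫ t in (0 : ℝ)..(2 * Real.pi),
        (NormedSpace.exp ((Complex.I * (t : ℂ)) • H) *
          (PK * H * PI - PI * H * PK) *
          NormedSpace.exp ((-(Complex.I * (t : ℂ))) • H) * PJ).trace =
      ((4 * Real.pi : ℝ) : ℂ) *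
        (H * PK * H * PI * H * PJ - H * PI * H * PK * H * PJ).trace := by
  have hKJ : PK * PJ = 0 := by
    have := congrArg conjTranspose hJK
    simpa [conjTranspose_mul, hPJ, hPK] using this
  have hJI : PJ * PI = 0 := by
    have := congrArg conjTranspose hIJ
    simpa [conjTranspose_mul, hPI, hPJ] using this
  set A : Matrix (Fin n) (Fin n) ℂ := PK * H * PI - PI * H * PK with hA
  set T : ℂ := (H * PK * H * PI * H * PJ - H * PI * H * PK * H * PJ).trace with hT
  have hpt : ∀ t : ℝ,
      (NormedSpace.exp ((Complex.I * (t : ℂ)) • H) * A *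
        NormedSpace.exp ((-(Complex.I * (t : ℂ))) • H) * PJ).trace =
      (2 - Complex.exp (Complex.I * t) - Complex.exp (-(Complex.I * t))) * T := by
    intro t
    set e : ℂ := Complex.exp (Complex.I * t) with he
    set e' : ℂ := Complex.exp (-(Complex.I * t)) with he'
    have hee' : e * e' = 1 := by
      rw [he, he', ← Complex.exp_add]; simp
    rw [exp_smul_idem H hH2, exp_smul_idem H hH2, ← he, ← he']
    have expand : (1 + (e - 1) • H) * A * (1 + (e' - 1) • H) * PJ =
        A * PJ + (e' - 1) • (A * (H * PJ)) + (e - 1) • (H * (A * PJ)) +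
          ((e - 1) * (e' - 1)) • (H * (A * (H * PJ))) := by
      simp only [mul_add, add_mul, mul_smul_comm, smul_mul_assoc, one_mul, mul_one, smul_smul,
        smul_add, mul_assoc]
      match_scalars <;> ring
    rw [expand]
    have hAPJ : A * PJ = 0 := by
      rw [hA]; simp [sub_mul, mul_assoc, hIJ, hKJ]
    have hAHPJ : (A * (H * PJ)).trace = 0 := by
      rw [hA]
      simp only [sub_mul, trace_sub]
      have h1 : (PK * H * PI * (H * PJ)).trace = 0 := by
        rw [show PK * H * PI * (H * PJ) = PK * (H * PI * (H * PJ)) by noncomm_ring,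
          trace_mul_comm,
          show H * PI * (H * PJ) * PK = H * PI * H * (PJ * PK) by noncomm_ring, hJK]
        simp
      have h2 : (PI * H * PK * (H * PJ)).trace = 0 := by
        rw [show PI * H * PK * (H * PJ) = PI * (H * PK * (H * PJ)) by noncomm_ring,
          trace_mul_comm,
          show H * PK * (H * PJ) * PI = H * PK * H * (PJ * PI) by noncomm_ring, hJI]
        simp
      rw [h1, h2, sub_zero]
    have hHAHT : (H * (A * (H * PJ))).trace = T := by
      rw [hA, hT]; congr 1; noncomm_ring
    rw [hAPJ]
    simp only [trace_add, trace_smul, trace_zero, hHAHT, hAHPJ, mul_zero, smul_zero, smul_eq_mul,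
      add_zero, zero_add]
    have hcoef : (e - 1) * (e' - 1) = 2 - e - e' := by
      have h := hee'; ring_nf; linear_combination h
    rw [hcoef]
  rw [intervalIntegral.integral_congr (fun t _ => hpt t)]
  have hI : Complex.I ≠ 0 := Complex.I_ne_zero
  have hexp2pi : Complex.exp (Complex.I * ((2 * Real.pi : ℝ) : ℂ)) = 1 := by
    rw [show Complex.I * ((2 * Real.pi : ℝ) : ℂ) = 2 * Real.pi * Complex.I by push_cast; ring]
    exact Complex.exp_two_pi_mul_I
  have hInt1 : (∫ t in (0:ℝ)..(2 * Real.pi), Complex.exp (Complex.I * t)) = 0 := by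
    rw [integral_exp_mul_complex hI, hexp2pi]
    simp
  have hInt2 : (∫ t in (0:ℝ)..(2 * Real.pi), Complex.exp (-(Complex.I * t))) = 0 := by
    have hptw : ∀ t ∈ Set.uIcc (0:ℝ) (2 * Real.pi),
        Complex.exp (-(Complex.I * t)) = Complex.exp ((-Complex.I) * t) := by
      intro t _; ring_nf
    rw [intervalIntegral.integral_congr hptw, integral_exp_mul_complex (neg_ne_zero.2 hI)]
    rw [show (-Complex.I) * ((2 * Real.pi : ℝ) : ℂ) = -(Complex.I * ((2 * Real.pi : ℝ) : ℂ)) by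
      ring, Complex.exp_neg, hexp2pi]
    simp
  have hconst : (∫ t in (0:ℝ)..(2 * Real.pi), (2 : ℂ)) = ((4 * Real.pi : ℝ) : ℂ) := by
    simp [intervalIntegral.integral_const]
    push_cast; ring
  have hi1 : IntervalIntegrable (fun t : ℝ => Complex.exp (Complex.I * t))
      MeasureTheory.volume 0 (2 * Real.pi) := by
    apply Continuous.intervalIntegrable
    exact Complex.continuous_exp.comp (continuous_const.mul Complex.continuous_ofReal)
  have hi2 : IntervalIntegrable (fun t : ℝ => Complex.exp (-(Complex.I * t)))
      MeasureTheory.volume 0 (2 * Real.pi) := by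
    apply Continuous.intervalIntegrable
    exact Complex.continuous_exp.comp
      ((continuous_const.mul Complex.continuous_ofReal).neg)
  have hic : IntervalIntegrable (fun _ : ℝ => (2 : ℂ)) MeasureTheory.volume 0 (2 * Real.pi) :=
    intervalIntegrable_const
  calc (∫ t in (0:ℝ)..(2 * Real.pi),
        (2 - Complex.exp (Complex.I * t) - Complex.exp (-(Complex.I * t))) * T)
      = (∫ t in (0:ℝ)..(2 * Real.pi),
        (2 - Complex.exp (Complex.I * t) - Complex.exp (-(Complex.I * t)))) * T := by
        rw [intervalIntegral.integral_mul_const]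
    _ = ((4 * Real.pi : ℝ) : ℂ) * T := by
        rw [intervalIntegral.integral_sub (hic.sub hi1) hi2,
          intervalIntegral.integral_sub hic hi1, hInt1, hInt2, hconst]
        ring
end

section
/- Let H be an n×n complex matrix with Hᴴ = H and H·H = H, and let P_I, P_J, P_K be Hermitian idempotent n×n matrices with P_I·P_J = 0, P_J·P_K = 0, and P_K·P_I = 0. Then the sum of the three cyclic current integrals equals ∫₀^{2π} [ Tr( e^{itH} (P_K H P_I − P_I H P_K) e^{−itH} P_J ) + Tr( e^{itH} (P_J H P_K − P_K H P_J) e^{−itH} P_I ) + Tr( e^{itH} (P_I H P_J − P_J H P_I) e^{−itH} P_K ) ] dt = 12π · Tr( H P_K H P_I H P_J − H P_I H P_K H P_J ). -/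
set_option maxHeartbeats 1000000

open Matrix

private theorem exp_idem_abstract {A : Type*} [NormedRing A] [NormedAlgebra ℂ A]
    [CompleteSpace A] (H : A) (hH2 : H * H = H) (c : ℂ) :
    NormedSpace.exp (c • H) = 1 + (Complex.exp c - 1) • H := by
  have hpow : ∀ k : ℕ, H ^ (k + 1) = H := by
    intro k; induction k with
    | zero => simp
    | succ k ih => rw [pow_succ, ih, hH2]
  rw [NormedSpace.exp_eq_tsum (𝕂 := ℂ)]
  have hsum : Summable fun k : ℕ => ((k.factorial : ℂ)⁻¹) • (c • H) ^ k :=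
    NormedSpace.expSeries_summable' (𝕂 := ℂ) (c • H)
  simp only []
  rw [Summable.tsum_eq_zero_add hsum]
  have h1 : ∀ k : ℕ, (((k + 1).factorial : ℂ)⁻¹) • (c • H) ^ (k + 1)
      = ((((k + 1).factorial : ℂ)⁻¹) * c ^ (k + 1)) • H := by
    intro k; rw [smul_pow, hpow, smul_smul]
  simp only [h1, pow_zero, Nat.factorial_zero, Nat.cast_one, inv_one, one_smul]
  have hs2 : Summable fun k : ℕ => (((k + 1).factorial : ℂ)⁻¹) * c ^ (k + 1) := by
    have := NormedSpace.expSeries_summable' (𝕂 := ℂ) c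
    simp only [smul_eq_mul] at this
    exact ((summable_nat_add_iff 1).2 this)
  rw [Summable.tsum_smul_const hs2]
  congr 1
  have he := congrFun Complex.exp_eq_exp_ℂ c
  rw [NormedSpace.exp_eq_tsum (𝕂 := ℂ)] at he
  simp only [] at he
  rw [he, Summable.tsum_eq_zero_add (NormedSpace.expSeries_summable' (𝕂 := ℂ) c)]
  simp [smul_eq_mul]

private theorem exp_idem {n : ℕ} (H : Matrix (Fin n) (Fin n) ℂ) (hH2 : H * H = H) (c : ℂ) :
    NormedSpace.exp (c • H) = 1 + (Complex.exp c - 1) • H := by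
  letI : SeminormedRing (Matrix (Fin n) (Fin n) ℂ) := Matrix.linftyOpSemiNormedRing
  letI : NormedRing (Matrix (Fin n) (Fin n) ℂ) := Matrix.linftyOpNormedRing
  letI : NormedAlgebra ℂ (Matrix (Fin n) (Fin n) ℂ) := Matrix.linftyOpNormedAlgebra
  exact exp_idem_abstract H hH2 c

private theorem term_expand {n : ℕ} (H A P : Matrix (Fin n) (Fin n) ℂ) (z w : ℂ)
    (h0 : A * P = 0) (h2 : (A * (H * P)).trace = 0) :
    ((1 + (z - 1) • H) * A * (1 + (w - 1) • H) * P).trace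
      = ((z - 1) * (w - 1)) * (H * (A * (H * P))).trace := by
  have expand : (1 + (z - 1) • H) * A * (1 + (w - 1) • H) * P
      = A * P + (z - 1) • (H * (A * P)) + (w - 1) • (A * (H * P))
        + ((z - 1) * (w - 1)) • (H * (A * (H * P))) := by
    simp only [add_mul, mul_add, one_mul, mul_one, Matrix.smul_mul, Matrix.mul_smul,
      smul_smul, Matrix.mul_assoc]
    module
  rw [expand, h0]
  simp [Matrix.trace_add, Matrix.trace_smul, h2, smul_eq_mul]

private theorem tr5_zero {n : ℕ} (A B C D E : Matrix (Fin n) (Fin n) ℂ) (h : E * A = 0) :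
    (A * B * C * (D * E)).trace = 0 := by
  rw [Matrix.trace_mul_comm]
  simp only [← Matrix.mul_assoc]
  rw [show D * E * A * B * C = D * (E * A) * B * C by simp only [Matrix.mul_assoc]]
  simp [h]

private theorem cyc6 {n : ℕ} (A B C D E F : Matrix (Fin n) (Fin n) ℂ) :
    (A * B * C * D * E * F).trace = (E * F * A * B * C * D).trace := by
  rw [show A * B * C * D * E * F = (A * B * C * D) * (E * F) by simp only [Matrix.mul_assoc],
    Matrix.trace_mul_comm,
    show E * F * (A * B * C * D) = E * F * A * B * C * D by simp only [Matrix.mul_assoc]]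

/-- For a projector Hamiltonian `H` and mutually orthogonal projections `P_I, P_J, P_K`,
the sum of the three cyclic time-integrated currents equals
`12π·Tr(H P_K H P_I H P_J − H P_I H P_K H P_J)` (the real-space Chern number formula). -/
theorem cyclic_currents_chern {n : ℕ}
    (H PI PJ PK : Matrix (Fin n) (Fin n) ℂ)
    (hH : Hᴴ = H) (hH2 : H * H = H)
    (hPI : PIᴴ = PI) (hPI2 : PI * PI = PI)
    (hPJ : PJᴴ = PJ) (hPJ2 : PJ * PJ = PJ)
    (hPK : PKᴴ = PK) (hPK2 : PK * PK = PK)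
    (hIJ : PI * PJ = 0) (hJK : PJ * PK = 0) (hKI : PK * PI = 0) :
    ∫ t in (0 : ℝ)..(2 * Real.pi),
        ((NormedSpace.exp ((Complex.I * (t : ℂ)) • H) *
            (PK * H * PI - PI * H * PK) *
            NormedSpace.exp ((-(Complex.I * (t : ℂ))) • H) * PJ).trace +
          (NormedSpace.exp ((Complex.I * (t : ℂ)) • H) *
            (PJ * H * PK - PK * H * PJ) *
            NormedSpace.exp ((-(Complex.I * (t : ℂ))) • H) * PI).trace +
          (NormedSpace.exp ((Complex.I * (t : ℂ)) • H) *
            (PI * H * PJ - PJ * H * PI) *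
            NormedSpace.exp ((-(Complex.I * (t : ℂ))) • H) * PK).trace) =
      ((12 * Real.pi : ℝ) : ℂ) *
        (H * PK * H * PI * H * PJ - H * PI * H * PK * H * PJ).trace := by
  -- derived orthogonality
  have hJI : PJ * PI = 0 := by
    have := congrArg conjTranspose hIJ
    simpa [Matrix.conjTranspose_mul, hPI, hPJ] using this
  have hKJ : PK * PJ = 0 := by
    have := congrArg conjTranspose hJK
    simpa [Matrix.conjTranspose_mul, hPJ, hPK] using this
  have hIK : PI * PK = 0 := by
    have := congrArg conjTranspose hKI
    simpa [Matrix.conjTranspose_mul, hPI, hPK] using this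
  set T : ℂ := (H * PK * H * PI * H * PJ).trace - (H * PI * H * PK * H * PJ).trace with hT
  -- pointwise value of the integrand
  have hpt : ∀ t : ℝ,
      ((NormedSpace.exp ((Complex.I * (t : ℂ)) • H) *
            (PK * H * PI - PI * H * PK) *
            NormedSpace.exp ((-(Complex.I * (t : ℂ))) • H) * PJ).trace +
          (NormedSpace.exp ((Complex.I * (t : ℂ)) • H) *
            (PJ * H * PK - PK * H * PJ) *
            NormedSpace.exp ((-(Complex.I * (t : ℂ))) • H) * PI).trace +
          (NormedSpace.exp ((Complex.I * (t : ℂ)) • H) *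
            (PI * H * PJ - PJ * H * PI) *
            NormedSpace.exp ((-(Complex.I * (t : ℂ))) • H) * PK).trace)
        = 6 * T - (3 * T) * Complex.exp (Complex.I * (t : ℂ))
            - (3 * T) * Complex.exp ((-Complex.I) * (t : ℂ)) := by
    intro t
    set z := Complex.exp (Complex.I * (t : ℂ)) with hz
    set w := Complex.exp ((-Complex.I) * (t : ℂ)) with hw
    have hzw : z * w = 1 := by
      rw [hz, hw, ← Complex.exp_add]
      ring_nf
      exact Complex.exp_zero
    rw [exp_idem H hH2, exp_idem H hH2]
    have hw' : Complex.exp (-(Complex.I * (t : ℂ))) = w := by rw [hw]; ring_nf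
    rw [hw']
    -- term 1
    have e1 : ((1 + (z - 1) • H) * (PK * H * PI - PI * H * PK) * (1 + (w - 1) • H) * PJ).trace
        = ((z - 1) * (w - 1)) * T := by
      rw [term_expand]
      · congr 1
        have : H * ((PK * H * PI - PI * H * PK) * (H * PJ))
            = H * PK * H * PI * H * PJ - H * PI * H * PK * H * PJ := by
          simp only [Matrix.sub_mul, Matrix.mul_sub, Matrix.mul_assoc]
        rw [this, Matrix.trace_sub, hT]
      · simp only [Matrix.sub_mul, Matrix.mul_assoc, hIJ, hKJ, Matrix.mul_zero, sub_zero,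
          sub_self]
      · rw [Matrix.sub_mul, Matrix.trace_sub, tr5_zero PK H PI H PJ hJK,
          tr5_zero PI H PK H PJ hJI, sub_zero]
    -- term 2
    have e2 : ((1 + (z - 1) • H) * (PJ * H * PK - PK * H * PJ) * (1 + (w - 1) • H) * PI).trace
        = ((z - 1) * (w - 1)) * T := by
      rw [term_expand]
      · congr 1
        have : H * ((PJ * H * PK - PK * H * PJ) * (H * PI))
            = H * PJ * H * PK * H * PI - H * PK * H * PJ * H * PI := by
          simp only [Matrix.sub_mul, Matrix.mul_sub, Matrix.mul_assoc]
        rw [this, Matrix.trace_sub, cyc6 H PJ H PK H PI, cyc6 H PI H PJ H PK,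
          cyc6 H PK H PJ H PI, hT]
      · simp only [Matrix.sub_mul, Matrix.mul_assoc, hJI, hKI, Matrix.mul_zero, sub_zero,
          sub_self]
      · rw [Matrix.sub_mul, Matrix.trace_sub, tr5_zero PJ H PK H PI hIJ,
          tr5_zero PK H PJ H PI hIK, sub_zero]
    -- term 3
    have e3 : ((1 + (z - 1) • H) * (PI * H * PJ - PJ * H * PI) * (1 + (w - 1) • H) * PK).trace
        = ((z - 1) * (w - 1)) * T := by
      rw [term_expand]
      · congr 1
        have : H * ((PI * H * PJ - PJ * H * PI) * (H * PK))
            = H * PI * H * PJ * H * PK - H * PJ * H * PI * H * PK := by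
          simp only [Matrix.sub_mul, Matrix.mul_sub, Matrix.mul_assoc]
        rw [this, Matrix.trace_sub, cyc6 H PI H PJ H PK,
          cyc6 H PJ H PI H PK, cyc6 H PK H PJ H PI, hT]
      · simp only [Matrix.sub_mul, Matrix.mul_assoc, hJK, hIK, Matrix.mul_zero, sub_zero,
          sub_self]
      · rw [Matrix.sub_mul, Matrix.trace_sub, tr5_zero PI H PJ H PK hKI,
          tr5_zero PJ H PI H PK hKJ, sub_zero]
    rw [e1, e2, e3]
    linear_combination (3 : ℂ) * T * hzw
  -- rewrite integrand
  rw [intervalIntegral.integral_congr (g := fun t : ℝ =>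
      6 * T - (3 * T) * Complex.exp (Complex.I * (t : ℂ))
        - (3 * T) * Complex.exp ((-Complex.I) * (t : ℂ)))
      (fun t _ => hpt t)]
  have hint1 : IntervalIntegrable (fun t : ℝ => (6 * T : ℂ)) MeasureTheory.volume 0 (2 * Real.pi) :=
    intervalIntegrable_const
  have hc2 : Continuous fun t : ℝ => (3 * T) * Complex.exp (Complex.I * (t : ℂ)) := by
    fun_prop
  have hc3 : Continuous fun t : ℝ => (3 * T) * Complex.exp ((-Complex.I) * (t : ℂ)) := by
    fun_prop
  rw [intervalIntegral.integral_sub ((hint1.sub (hc2.intervalIntegrable _ _)))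
      (hc3.intervalIntegrable _ _),
    intervalIntegral.integral_sub hint1 (hc2.intervalIntegrable _ _),
    intervalIntegral.integral_const,
    intervalIntegral.integral_const_mul, intervalIntegral.integral_const_mul,
    integral_exp_mul_complex (by simp [Complex.I_ne_zero]),
    integral_exp_mul_complex (by simp [Complex.I_ne_zero])]
  have h2pi : Complex.exp (Complex.I * ((2 * Real.pi : ℝ) : ℂ)) = 1 := by
    rw [show Complex.I * ((2 * Real.pi : ℝ) : ℂ) = 2 * (Real.pi : ℂ) * Complex.I by
      push_cast; ring]
    exact Complex.exp_two_pi_mul_I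
  have h2pi' : Complex.exp ((-Complex.I) * ((2 * Real.pi : ℝ) : ℂ)) = 1 := by
    rw [show (-Complex.I) * ((2 * Real.pi : ℝ) : ℂ) = -(2 * (Real.pi : ℂ) * Complex.I) by
      push_cast; ring]
    rw [Complex.exp_neg, Complex.exp_two_pi_mul_I, inv_one]
  rw [h2pi, h2pi']
  simp only [Complex.ofReal_zero, mul_zero, Complex.exp_zero, sub_self, zero_div, mul_zero,
    sub_zero]
  rw [Matrix.trace_sub, ← hT, Complex.real_smul]
  push_cast
  ring
end
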